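/- ODE decay estimate independent of the initial value: let T > 0, γ > 0, β > 1, C̄ > 0, F > 0, and let f : [0,T] → ℝ be continuous with C̄ ≤ f(t) for all t and ∫₀^T f(s) ds ≤ F. Let Z : [0,T] → ℝ be differentiable with Z(t) > 0 for all t, satisfying Z'(t) = −γ Z(t)^β + f(t) Z(t) + f(t) on [0,T] and Z(0) ≥ (C̄/γ)^{1/(β−1)}. Then there exists a constant C depending only on γ, β, C̄ and F (and not on Z(0) or T) such that Z(t) ≤ C · t^{−1/(β−1)} for every t ∈ (0,T]; explicitly one may take C = (γ(β−1))^{−1/(β−1)} · exp( (1 + (γ/C̄)^{1/(β−1)}) F ). -/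

import Mathlib

open Real

set_option maxHeartbeats 1000000 in

/-- ODE decay estimate independent of the initial value, with the explicit constant
`C = (γ(β−1))^{−1/(β−1)} · exp( (1 + (γ/C̄)^{1/(β−1)}) F )`. -/
theorem ode_decay_estimate (T γ β Cb F : ℝ) (hT : 0 < T) (hγ : 0 < γ) (hβ : 1 < β)
    (hCb : 0 < Cb) (hF : 0 < F)
    (f : ℝ → ℝ) (hf : ContinuousOn f (Set.Icc 0 T))
    (hfC : ∀ t ∈ Set.Icc (0 : ℝ) T, Cb ≤ f t)
    (hfF : (∫ s in (0 : ℝ)..T, f s) ≤ F)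
    (Z : ℝ → ℝ) (hZpos : ∀ t ∈ Set.Icc (0 : ℝ) T, 0 < Z t)
    (hZ : ∀ t ∈ Set.Icc (0 : ℝ) T,
      HasDerivWithinAt Z (-γ * Z t ^ β + f t * Z t + f t) (Set.Icc 0 T) t)
    (hZ0 : (Cb / γ) ^ (1 / (β - 1)) ≤ Z 0) :
    ∀ t ∈ Set.Ioc (0 : ℝ) T,
      Z t ≤ ((γ * (β - 1)) ^ (-(1 / (β - 1))) *
          Real.exp ((1 + (γ / Cb) ^ (1 / (β - 1))) * F)) * t ^ (-(1 / (β - 1))) := by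
  have hβ1 : (0:ℝ) < β - 1 := by linarith
  set α : ℝ := 1 / (β - 1) with hα
  have hαpos : 0 < α := by positivity
  have hαβ : α * (β - 1) = 1 := by rw [hα]; field_simp
  set c : ℝ := (Cb / γ) ^ α with hcdef
  have hCbγ : (0:ℝ) < Cb / γ := div_pos hCb hγ
  have hc : 0 < c := Real.rpow_pos_of_pos hCbγ _
  have hcb : c ^ (β - 1) = Cb / γ := by
    rw [hcdef, ← Real.rpow_mul hCbγ.le]
    rw [hαβ, Real.rpow_one]
  have hZcont : ContinuousOn Z (Set.Icc 0 T) := fun t ht => (hZ t ht).continuousWithinAt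
  -- Step 1: lower bound `c ≤ Z t` on `[0, T]`.
  have hlow : ∀ t ∈ Set.Icc (0:ℝ) T, c ≤ Z t := by
    by_contra hcon
    push_neg at hcon
    obtain ⟨t₁, ht₁, hZt₁⟩ := hcon
    have ht₁sub : Set.Icc (0:ℝ) t₁ ⊆ Set.Icc 0 T := Set.Icc_subset_Icc le_rfl ht₁.2
    set S : Set ℝ := Set.Icc 0 t₁ ∩ Z ⁻¹' (Set.Ici c) with hS
    have h0S : (0:ℝ) ∈ S := ⟨⟨le_refl 0, ht₁.1⟩, hZ0⟩
    have hSclosed : IsClosed S :=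
      ContinuousOn.preimage_isClosed_of_isClosed (hZcont.mono ht₁sub) isClosed_Icc isClosed_Ici
    have hSbdd : BddAbove S := ⟨t₁, fun x hx => hx.1.2⟩
    set s := sSup S with hsdef
    have hsS : s ∈ S := hSclosed.csSup_mem ⟨0, h0S⟩ hSbdd
    have hst₁ : s < t₁ := by
      rcases lt_or_eq_of_le hsS.1.2 with h | h
      · exact h
      · exact absurd (h ▸ hsS.2) (not_le.mpr hZt₁)
    have hsT : s ∈ Set.Icc (0:ℝ) T := ht₁sub hsS.1
    have hIccsub : Set.Icc s t₁ ⊆ Set.Icc 0 T :=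
      Set.Icc_subset_Icc hsS.1.1 ht₁.2
    have hIoo : ∀ x ∈ Set.Ioo s t₁, Z x < c := by
      intro x hx
      by_contra hge
      push_neg at hge
      have : x ∈ S := ⟨⟨hsS.1.1.trans hx.1.le, hx.2.le⟩, hge⟩
      exact absurd (le_csSup hSbdd this) (not_le.mpr hx.1)
    have hmono : StrictMonoOn Z (Set.Icc s t₁) := by
      apply strictMonoOn_of_hasDerivWithinAt_pos (convex_Icc s t₁) (hZcont.mono hIccsub)
        (f' := fun x => -γ * Z x ^ β + f x * Z x + f x)
      · intro x hx
        rw [interior_Icc] at hx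
        have hxT : x ∈ Set.Icc (0:ℝ) T := hIccsub (Set.Ioo_subset_Icc_self hx)
        exact ((hZ x hxT).mono (by rw [interior_Icc]; exact (Set.Ioo_subset_Icc_self).trans hIccsub))
      · intro x hx
        rw [interior_Icc] at hx
        have hxT : x ∈ Set.Icc (0:ℝ) T := hIccsub (Set.Ioo_subset_Icc_self hx)
        have hzx : 0 < Z x := hZpos x hxT
        have hzc : Z x ≤ c := (hIoo x hx).le
        have hsplit : Z x ^ β = Z x ^ (β - 1) * Z x := by
          rw [show Z x ^ (β - 1) * Z x = Z x ^ (β - 1) * Z x ^ (1:ℝ) by rw [Real.rpow_one],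
            ← Real.rpow_add hzx]
          ring_nf
        have h1 : Z x ^ (β - 1) ≤ c ^ (β - 1) := Real.rpow_le_rpow hzx.le hzc hβ1.le
        have h2 : γ * Z x ^ (β - 1) ≤ Cb := by
          calc γ * Z x ^ (β - 1) ≤ γ * c ^ (β - 1) := by nlinarith
          _ = Cb := by rw [hcb]; field_simp
        rw [hsplit]
        nlinarith [hfC x hxT, mul_le_mul_of_nonneg_right h2 hzx.le,
          mul_le_mul_of_nonneg_right (hfC x hxT) hzx.le]
    have h1 := hmono (Set.left_mem_Icc.mpr hst₁.le) (Set.right_mem_Icc.mpr hst₁.le) hst₁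
    have : c ≤ Z s := hsS.2
    linarith
  -- Step 2: comparison argument.
  set G : ℝ → ℝ := fun u => ∫ s in (0:ℝ)..u, f s with hGdef
  set K : ℝ := (β - 1) * (1 + 1/c) with hKdef
  have hK : 0 ≤ K := by
    have : 0 < 1/c := by positivity
    rw [hKdef]; nlinarith
  have hfint : ∀ a b, a ∈ Set.Icc (0:ℝ) T → b ∈ Set.Icc (0:ℝ) T →
      IntervalIntegrable f MeasureTheory.volume a b := by
    intro a b ha hb
    apply ContinuousOn.intervalIntegrable
    exact hf.mono (Set.uIcc_subset_Icc ha hb)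
  have hGnonneg : ∀ t ∈ Set.Icc (0:ℝ) T, 0 ≤ G t := by
    intro t ht
    apply intervalIntegral.integral_nonneg ht.1
    intro u hu
    exact hCb.le.trans (hfC u ⟨hu.1, hu.2.trans ht.2⟩)
  have hGF : ∀ t ∈ Set.Icc (0:ℝ) T, G t ≤ F := by
    intro t ht
    have hadd := intervalIntegral.integral_add_adjacent_intervals
      (hfint 0 t ⟨le_rfl, hT.le⟩ ht) (hfint t T ht ⟨hT.le, le_rfl⟩)
    have h2 : 0 ≤ ∫ s in t..T, f s :=
      intervalIntegral.integral_nonneg ht.2 (fun u hu => hCb.le.trans (hfC u ⟨ht.1.trans hu.1, hu.2⟩))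
    have : G t = ∫ s in (0:ℝ)..t, f s := rfl
    rw [this]
    linarith
  set W : ℝ → ℝ := fun u => Z u ^ (1 - β) * Real.exp (K * G u) - γ * (β - 1) * u with hWdef
  have hGcont : ContinuousOn G (Set.Icc 0 T) := by
    have h1 : MeasureTheory.IntegrableOn f (Set.uIcc 0 T) MeasureTheory.volume := by
      rw [Set.uIcc_of_le hT.le]
      exact hf.integrableOn_Icc
    have := intervalIntegral.continuousOn_primitive_interval h1
    rwa [Set.uIcc_of_le hT.le] at this
  have hWcont : ContinuousOn W (Set.Icc 0 T) := by
    apply ContinuousOn.sub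
    · apply ContinuousOn.mul
      · exact hZcont.rpow_const (fun x hx => Or.inl (hZpos x hx).ne')
      · exact ContinuousOn.rexp (hGcont.const_smul K)
    · exact (continuous_const.mul continuous_id).continuousOn
  have hWmono : MonotoneOn W (Set.Icc 0 T) := by
    apply monotoneOn_of_hasDerivWithinAt_nonneg (convex_Icc 0 T) hWcont
      (f' := fun x => ((-γ * Z x ^ β + f x * Z x + f x) * (1 - β) * Z x ^ ((1 - β) - 1)) *
          Real.exp (K * G x)
        + Z x ^ (1 - β) * (Real.exp (K * G x) * (K * f x)) - γ * (β - 1) * 1)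
    · intro x hx
      rw [interior_Icc] at hx
      have hxT : x ∈ Set.Icc (0:ℝ) T := Set.Ioo_subset_Icc_self hx
      have hmem : Set.Icc (0:ℝ) T ∈ nhds x := Icc_mem_nhds hx.1 hx.2
      have hz : HasDerivAt Z (-γ * Z x ^ β + f x * Z x + f x) x := (hZ x hxT).hasDerivAt hmem
      have hzx : 0 < Z x := hZpos x hxT
      have hG' : HasDerivAt G (f x) x := by
        apply intervalIntegral.integral_hasDerivAt_right (hfint 0 x ⟨le_rfl, hT.le⟩ hxT)
        · exact AEStronglyMeasurable.stronglyMeasurableAtFilter_of_mem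
            (hf.aestronglyMeasurable measurableSet_Icc) hmem
        · exact hf.continuousAt hmem
      have h1 : HasDerivAt (fun u => Z u ^ (1 - β))
          ((-γ * Z x ^ β + f x * Z x + f x) * (1 - β) * Z x ^ ((1 - β) - 1)) x :=
        hz.rpow_const (Or.inl hzx.ne')
      have h2 : HasDerivAt (fun u => Real.exp (K * G u))
          (Real.exp (K * G x) * (K * f x)) x := (hG'.const_mul K).exp
      have h3 : HasDerivAt (fun u => γ * (β - 1) * u) (γ * (β - 1) * 1) x :=
        (hasDerivAt_id x).const_mul (γ * (β - 1))
      exact ((h1.mul h2).sub h3).hasDerivWithinAt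
    · intro x hx
      rw [interior_Icc] at hx
      have hxT : x ∈ Set.Icc (0:ℝ) T := Set.Ioo_subset_Icc_self hx
      have hzx : 0 < Z x := hZpos x hxT
      have hzc : c ≤ Z x := hlow x hxT
      have hq : Cb ≤ f x := hfC x hxT
      have hE1 : 1 ≤ Real.exp (K * G x) :=
        Real.one_le_exp (mul_nonneg hK (hGnonneg x hxT))
      have hzb : 0 < Z x ^ (-β) := Real.rpow_pos_of_pos hzx _
      rw [show ((1:ℝ) - β) - 1 = -β by ring]
      have eB : Z x ^ (-β) * Z x ^ β = 1 := by
        rw [← Real.rpow_add hzx]; norm_num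
      have eC : Z x ^ (1 - β) = Z x ^ (-β) * Z x := by
        rw [show Z x ^ (-β) * Z x = Z x ^ (-β) * Z x ^ (1:ℝ) from by rw [Real.rpow_one],
          ← Real.rpow_add hzx]
        ring_nf
      have key : (-γ * Z x ^ β + f x * Z x + f x) * (1 - β) * Z x ^ (-β) * Real.exp (K * G x)
            + Z x ^ (1 - β) * (Real.exp (K * G x) * (K * f x)) - γ * (β - 1) * 1
          = Real.exp (K * G x) * ((β - 1) * γ * (Z x ^ (-β) * Z x ^ β)
              + (β - 1) * f x * Z x ^ (-β) * (Z x / c - 1)) - γ * (β - 1) := by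
        rw [eC, hKdef]
        field_simp
        ring
      rw [key, eB]
      have hY : 0 ≤ (β - 1) * f x * Z x ^ (-β) * (Z x / c - 1) := by
        apply mul_nonneg (mul_nonneg (mul_nonneg hβ1.le (hCb.le.trans hq)) hzb.le)
        have : 1 ≤ Z x / c := (one_le_div hc).mpr hzc
        linarith
      have hXY : 0 ≤ (β - 1) * γ * 1 + (β - 1) * f x * Z x ^ (-β) * (Z x / c - 1) := by
        nlinarith
      nlinarith [mul_le_mul_of_nonneg_right hE1 hXY]
  -- Step 3: conclusion.
  intro t ht
  have htT : t ∈ Set.Icc (0:ℝ) T := ⟨ht.1.le, ht.2⟩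
  have h0T : (0:ℝ) ∈ Set.Icc (0:ℝ) T := ⟨le_rfl, hT.le⟩
  have hW := hWmono h0T htT ht.1.le
  have hG0 : G 0 = 0 := intervalIntegral.integral_same
  have hZ0pos : 0 < Z 0 := hZpos 0 h0T
  have hW0 : W 0 = Z 0 ^ (1 - β) := by
    simp [hWdef, hG0]
  have hEpos : (0:ℝ) < Real.exp (K * G t) := Real.exp_pos _
  have h2 : 0 < Z 0 ^ (1 - β) := Real.rpow_pos_of_pos hZ0pos _
  have h1 : γ * (β - 1) * t ≤ Z t ^ (1 - β) * Real.exp (K * G t) := by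
    have hWt : W t = Z t ^ (1 - β) * Real.exp (K * G t) - γ * (β - 1) * t := rfl
    rw [hW0, hWt] at hW
    linarith
  have hkey : γ * (β - 1) * t * Real.exp (-(K * G t)) ≤ Z t ^ (1 - β) := by
    have h3 := mul_le_mul_of_nonneg_right h1 (Real.exp_pos (-(K * G t))).le
    rwa [mul_assoc (Z t ^ (1 - β)), ← Real.exp_add, add_neg_cancel, Real.exp_zero, mul_one] at h3
  set R : ℝ := γ * (β - 1) * t * Real.exp (-(K * G t)) with hRdef
  have hR : 0 < R := by
    have h4 : 0 < t := ht.1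
    rw [hRdef]; positivity
  have hZtR : Z t ≤ R ^ (-α) := by
    have hEq : (Z t ^ (1 - β)) ^ (-α) = Z t := by
      rw [← Real.rpow_mul (hZpos t htT).le,
        show (1 - β) * (-α) = 1 by linear_combination hαβ, Real.rpow_one]
    rw [← hEq]
    exact Real.rpow_le_rpow_of_nonpos hR hkey (neg_nonpos.mpr hαpos.le)
  have hsplitR : R ^ (-α) = (γ * (β - 1)) ^ (-α) * Real.exp (K * G t * α) * t ^ (-α) := by
    rw [hRdef, Real.mul_rpow (mul_nonneg (by positivity) ht.1.le) (Real.exp_pos _).le,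
      Real.mul_rpow (by positivity) ht.1.le, ← Real.exp_mul,
      show -(K * G t) * (-α) = K * G t * α by ring]
    ring
  have hKα : K * α = 1 + (γ / Cb) ^ α := by
    have hinv : (γ / Cb) ^ α = c⁻¹ := by
      rw [hcdef, ← Real.inv_rpow hCbγ.le, inv_div]
    rw [hinv, hKdef]
    linear_combination (1 + 1/c) * hαβ
  have hexp : Real.exp (K * G t * α) ≤ Real.exp ((1 + (γ / Cb) ^ α) * F) := by
    apply Real.exp_le_exp.mpr
    rw [show K * G t * α = (K * α) * G t by ring, hKα]
    have hpos : 0 < 1 + (γ / Cb) ^ α := by positivity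
    exact mul_le_mul_of_nonneg_left (hGF t htT) hpos.le
  calc Z t ≤ R ^ (-α) := hZtR
    _ = (γ * (β - 1)) ^ (-α) * Real.exp (K * G t * α) * t ^ (-α) := hsplitR
    _ ≤ (γ * (β - 1)) ^ (-α) * Real.exp ((1 + (γ / Cb) ^ α) * F) * t ^ (-α) := by
        apply mul_le_mul_of_nonneg_right _ (Real.rpow_pos_of_pos ht.1 _).le
        exact mul_le_mul_of_nonneg_left hexp (Real.rpow_pos_of_pos (by positivity) _).le
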